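/- Let Z be a p-filiform complex Zinbiel algebra of first type with adapted basis {e_1,…,e_{n−p},f_1,…,f_p}. If f_j ∘ e_i = 0 for some 1 ≤ i ≤ n−p−2 and 1 ≤ j ≤ p, then f_j ∘ e_{i+1} = f_j ∘ e_{i+2} = ⋯ = f_j ∘ e_{n−p−1} = 0. -/
import Mathlib


open Module Submodule

/-- The Zinbiel identity for a bilinear operation `mul` on a complex vector space:
`(x∘y)∘z = x∘(y∘z) + x∘(z∘y)`. -/
def IsZinbiel {Z : Type*} [AddCommGroup Z] [Module ℂ Z] (mul : Z →ₗ[ℂ] Z →ₗ[ℂ] Z) : Prop :=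
  ∀ x y z : Z, mul (mul x y) z = mul x (mul y z) + mul x (mul z y)
/-- The square `Z ∘ Z` of the algebra. -/
def algSq {Z : Type*} [AddCommGroup Z] [Module ℂ Z] (mul : Z →ₗ[ℂ] Z →ₗ[ℂ] Z) :
    Submodule ℂ Z :=
  Submodule.span ℂ {z | ∃ x y, z = mul x y}
/-- `C(Z) = (n-p, 1, …, 1)` (`p`-filiformity) expressed via the left multiplication
operators: for every `x ∉ Z²` the nilpotent operator `L_x` satisfies `L_x^(n-p) = 0`
and has rank at most `n-p-1`; this says exactly that the Jordan type of every `L_x`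
is lexicographically at most `(n-p, 1, …, 1)`. -/
def CharSeqMax {Z : Type*} [AddCommGroup Z] [Module ℂ Z]
    (mul : Z →ₗ[ℂ] Z →ₗ[ℂ] Z) (n p : ℕ) : Prop :=
  ∀ x : Z, x ∉ algSq mul →
    ((mul x : Module.End ℂ Z) ^ (n - p) = 0) ∧
      Module.finrank ℂ (LinearMap.range (mul x)) ≤ n - p - 1
/-- The adapted family `e_1, …, e_m, f_1, …, f_p` indexed by `Fin m ⊕ Fin p`. -/
def adaptedFam {Z : Type*} (m p : ℕ) (e f : ℕ → Z) : Fin m ⊕ Fin p → Z :=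
  Sum.elim (fun i => e ((i : ℕ) + 1)) (fun j => f ((j : ℕ) + 1))

/-- Lemma (`lemma`): in a `p`-filiform complex Zinbiel algebra of first type with
adapted basis, if `f_j ∘ e_i = 0` for some `1 ≤ i ≤ n-p-2` and `1 ≤ j ≤ p`, then
`f_j ∘ e_{i+1} = ⋯ = f_j ∘ e_{n-p-1} = 0`. -/
theorem first_type_fj_ei_zero_propagates
    {Z : Type*} [AddCommGroup Z] [Module ℂ Z]
    (mul : Z →ₗ[ℂ] Z →ₗ[ℂ] Z) (hzin : IsZinbiel mul)
    (n p : ℕ) (hpn : p < n)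
    (e f : ℕ → Z)
    -- `{e_1, …, e_{n-p}, f_1, …, f_p}` is a basis of the `n`-dimensional algebra `Z`
    (hli : LinearIndependent ℂ (adaptedFam (n - p) p e f))
    (hsp : Submodule.span ℂ (Set.range (adaptedFam (n - p) p e f)) = ⊤)
    -- the basis is adapted of first type: `e_1 ∘ e_i = e_{i+1}`, `e_1 ∘ e_{n-p} = 0`,
    -- `e_1 ∘ f_j = 0`
    (hee : ∀ i, 1 ≤ i → i ≤ n - p - 1 → mul (e 1) (e i) = e (i + 1))
    (hetop : mul (e 1) (e (n - p)) = 0)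
    (hef : ∀ j, 1 ≤ j → j ≤ p → mul (e 1) (f j) = 0)
    -- `Z` is `p`-filiform with characteristic vector `e_1 ∉ Z²`
    (hfil : CharSeqMax mul n p)
    (he1sq : e 1 ∉ algSq mul)
    (i j : ℕ) (hi1 : 1 ≤ i) (hi2 : i ≤ n - p - 2) (hj1 : 1 ≤ j) (hj2 : j ≤ p)
    (hzero : mul (f j) (e i) = 0) :
    ∀ k, i + 1 ≤ k → k ≤ n - p - 1 → mul (f j) (e k) = 0 := by
  -- First: `e_k ∘ e_1 = k • e_{k+1}` for `1 ≤ k ≤ n-p-2`.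
  have ekone : ∀ k, 1 ≤ k → k ≤ n - p - 2 → mul (e k) (e 1) = (k : ℂ) • e (k + 1) := by
    intro k
    induction k with
    | zero => intro h; omega
    | succ k ih =>
      intro _ hk
      by_cases hk0 : k = 0
      · subst hk0
        rw [hee 1 le_rfl (by omega)]
        norm_num
      · have hk1 : 1 ≤ k := by omega
        have h1 : mul (e 1) (e k) = e (k + 1) := hee k hk1 (by omega)
        have h2 : mul (e 1) (e (k + 1)) = e (k + 1 + 1) := hee (k + 1) (by omega) (by omega)
        have hz := hzin (e 1) (e k) (e 1)
        rw [h1, ih hk1 (by omega), map_smul, h2] at hz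
        rw [hz]
        push_cast
        rw [add_smul, one_smul]
  -- Step: if `f_j ∘ e_k = 0` with `1 ≤ k ≤ n-p-2`, then `f_j ∘ e_{k+1} = 0`.
  have step : ∀ k, 1 ≤ k → k ≤ n - p - 2 → mul (f j) (e k) = 0 →
      mul (f j) (e (k + 1)) = 0 := by
    intro k hk1 hk2 h0
    have hz := hzin (f j) (e k) (e 1)
    rw [h0, ekone k hk1 hk2, hee k hk1 (by omega), map_smul] at hz
    simp only [map_zero, LinearMap.zero_apply] at hz
    have hsum : ((k : ℂ) + 1) • mul (f j) (e (k + 1)) = 0 := by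
      rw [add_smul, one_smul]
      exact hz.symm
    have hne : ((k : ℂ) + 1) ≠ 0 := by
      exact_mod_cast Nat.cast_add_one_ne_zero (R := ℂ) k
    exact (smul_eq_zero.mp hsum).resolve_left hne
  intro k
  induction k with
  | zero => intro h1 h2; omega
  | succ k ih =>
    intro hk1 hk2
    rcases Nat.eq_or_lt_of_le (show i ≤ k by omega) with h | h
    · exact step k (by omega) (by omega) (h ▸ hzero)
    · exact step k (by omega) (by omega) (ih (by omega) (by omega))
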